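/- arXiv:2405.17186 — 2 statements merged into one kernel-verified Lean document; each statement's English description precedes it below -/
import Mathlib

section
/- Let T > 0, τ ∈ (0, T), A > 0, α > 0 and B > 0. Suppose y : [0, T) → [0, ∞) is differentiable and satisfies y'(t) + A·(y(t))^α ≤ h(t) for all t ∈ (0, T), where h : [0, T) → [0, ∞) is locally integrable and satisfies ∫_{t−τ}^{t} h(s) ds ≤ B for all t ∈ (τ, T). Then y(t) ≤ max { y(0) + B, τ^(−1/α)·(B/A)^(1/α) + 2B } for all t ∈ (τ, T). -/
open MeasureTheory

/-- Uniform-Gronwall-type Lemma 2.4. -/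
theorem stmt_2 (T τ A α B : ℝ) (hT : 0 < T) (hτ : τ ∈ Set.Ioo 0 T)
    (hA : 0 < A) (hα : 0 < α) (hB : 0 < B)
    (y h : ℝ → ℝ)
    (hy_nonneg : ∀ t : ℝ, 0 ≤ t → t < T → 0 ≤ y t)
    (hy_diff : ∀ t : ℝ, 0 ≤ t → t < T → DifferentiableAt ℝ y t)
    (hh_nonneg : ∀ t : ℝ, 0 ≤ t → t < T → 0 ≤ h t)
    (hh_int : LocallyIntegrableOn h (Set.Ico 0 T))
    (hy_ode : ∀ t : ℝ, 0 < t → t < T → deriv y t + A * (y t) ^ α ≤ h t)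
    (hh_bound : ∀ t : ℝ, τ < t → t < T → (∫ s in Set.Ioo (t - τ) t, h s) ≤ B) :
    ∀ t : ℝ, τ < t → t < T →
      y t ≤ max (y 0 + B) (τ ^ (-(1 / α)) * (B / A) ^ (1 / α) + 2 * B) := by
  obtain ⟨hτ0, hτT⟩ := hτ
  set K : ℝ := (B / (A * τ)) ^ (1 / α) with hKdef
  set M : ℝ := max (y 0 + B) (τ ^ (-(1 / α)) * (B / A) ^ (1 / α) + 2 * B) with hMdef
  have hKnonneg : 0 ≤ K := Real.rpow_nonneg (by positivity) _
  have hKα : A * K ^ α = B / τ := by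
    have : K ^ α = B / (A * τ) := by
      rw [hKdef, ← Real.rpow_mul (by positivity), one_div_mul_cancel hα.ne', Real.rpow_one]
    rw [this]; field_simp
  have hKeq : K = τ ^ (-(1 / α)) * (B / A) ^ (1 / α) := by
    rw [hKdef]
    have : B / (A * τ) = (B / A) * τ⁻¹ := by field_simp
    rw [this, Real.mul_rpow (by positivity) (by positivity), Real.inv_rpow hτ0.le,
      ← Real.rpow_neg hτ0.le, mul_comm]
  -- integrability
  have h_int : ∀ s t : ℝ, 0 ≤ s → t < T → IntegrableOn h (Set.Icc s t) := by
    intro s t hs ht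
    rcases le_or_gt s t with hst | hst
    · exact hh_int.integrableOn_compact_subset
        (fun x hx => ⟨hs.trans hx.1, lt_of_le_of_lt hx.2 ht⟩) isCompact_Icc
    · simp [Set.Icc_eq_empty_of_lt hst]
  -- FTC-type inequality
  have ftc : ∀ (s t : ℝ) (φ : ℝ → ℝ), 0 ≤ s → s ≤ t → t < T →
      IntegrableOn φ (Set.Icc s t) → (∀ x ∈ Set.Ioo s t, deriv y x ≤ φ x) →
      y t - y s ≤ ∫ u in Set.Ioo s t, φ u := by
    intro s t φ hs hst ht hφint hφ
    have hcont : ContinuousOn y (Set.Icc s t) := fun x hx =>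
      ((hy_diff x (hs.trans hx.1) (lt_of_le_of_lt hx.2 ht)).continuousAt).continuousWithinAt
    have hderiv : ∀ x ∈ Set.Ioo s t, HasDerivWithinAt y (deriv y x) (Set.Ioi x) x :=
      fun x hx => ((hy_diff x (hs.trans hx.1.le)
        (lt_of_lt_of_le hx.2 (le_of_lt ht))).hasDerivAt).hasDerivWithinAt
    have := intervalIntegral.sub_le_integral_of_hasDeriv_right_of_le hst hcont hderiv hφint hφ
    rwa [intervalIntegral.integral_of_le hst, MeasureTheory.integral_Ioc_eq_integral_Ioo] at this
  have hyα : ∀ x : ℝ, 0 ≤ x → x < T → 0 ≤ A * (y x) ^ α := fun x hx hxT => by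
    have := hy_nonneg x hx hxT
    positivity
  -- y t ≤ y s + ∫ h
  have bound1 : ∀ s t : ℝ, 0 ≤ s → s ≤ t → t < T →
      y t ≤ y s + ∫ u in Set.Ioo s t, h u := by
    intro s t hs hst ht
    have := ftc s t h hs hst ht (h_int s t hs ht) (fun x hx => by
      have h1 := hy_ode x (lt_of_le_of_lt hs hx.1) (hx.2.trans ht)
      have h2 := hyα x (hs.trans hx.1.le) (hx.2.trans ht)
      linarith)
    linarith
  -- integral bound over short intervals away from 0
  have intB : ∀ s t : ℝ, 0 < s → s ≤ t → t < T → t ≤ s + τ →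
      (∫ u in Set.Ioo s t, h u) ≤ B := by
    intro s t hs hst ht htsτ
    set t' : ℝ := max t (min (s + τ) ((τ + T) / 2)) with ht'def
    have ht'τ : τ < t' := lt_max_of_lt_right (lt_min (by linarith) (by linarith))
    have ht'T : t' < T := max_lt ht (lt_of_le_of_lt (min_le_right _ _) (by linarith))
    have ht's : t' - τ ≤ s := by
      have : t' ≤ s + τ := max_le htsτ (le_trans (min_le_left _ _) le_rfl)
      linarith
    have htt' : t ≤ t' := le_max_left _ _
    have hsub : Set.Ioo s t ⊆ Set.Ioo (t' - τ) t' :=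
      Set.Ioo_subset_Ioo (by linarith) htt'
    have hint' : IntegrableOn h (Set.Ioo (t' - τ) t') :=
      (h_int (t' - τ) t' (by linarith) ht'T).mono_set Set.Ioo_subset_Icc_self
    have hmono : (∫ u in Set.Ioo s t, h u) ≤ ∫ u in Set.Ioo (t' - τ) t', h u := by
      apply MeasureTheory.setIntegral_mono_set hint'
      · filter_upwards [ae_restrict_mem measurableSet_Ioo] with x hx
        exact hh_nonneg x (by have := hx.1; linarith) (hx.2.trans ht'T)
      · exact Filter.Eventually.of_forall hsub
    exact hmono.trans (hh_bound t' ht'τ ht'T)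
  have bound_step : ∀ s t : ℝ, 0 < s → s ≤ t → t < T → t ≤ s + τ → y t ≤ y s + B := by
    intro s t hs hst ht htsτ
    have := bound1 s t hs.le hst ht
    have := intB s t hs hst ht htsτ
    linarith
  -- initial interval via continuity at 0
  have init : ∀ t : ℝ, 0 < t → t ≤ τ → y t ≤ y 0 + B := by
    intro t ht htτ
    have htT : t < T := lt_of_le_of_lt htτ hτT
    have hev : ∀ s ∈ Set.Ioo (0 : ℝ) t, y t - B ≤ y s := by
      intro s hs
      have := bound_step s t hs.1 hs.2.le htT (by linarith [hs.1])
      linarith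
    have hcont : Filter.Tendsto y (nhdsWithin 0 (Set.Ioo 0 t)) (nhds (y 0)) :=
      ((hy_diff 0 le_rfl hT).continuousAt.tendsto).mono_left nhdsWithin_le_nhds
    have : (nhdsWithin (0 : ℝ) (Set.Ioo 0 t)).NeBot := left_nhdsWithin_Ioo_neBot ht
    have := ge_of_tendsto hcont
      (Filter.eventually_iff_exists_mem.2 ⟨Set.Ioo 0 t, self_mem_nhdsWithin, hev⟩)
    linarith
  -- case 2: stay above K
  have case2 : ∀ t : ℝ, τ < t → t < T → (∀ s ∈ Set.Ioo (t - τ) t, K < y s) →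
      y t ≤ y (t - τ) := by
    intro t htτ htT hbig
    have h0 : (0 : ℝ) ≤ t - τ := by linarith
    have hint : IntegrableOn (fun u => h u - B / τ) (Set.Icc (t - τ) t) :=
      (h_int (t - τ) t h0 htT).sub (integrableOn_const measure_Icc_lt_top.ne)
    have hd : ∀ x ∈ Set.Ioo (t - τ) t, deriv y x ≤ h x - B / τ := by
      intro x hx
      have hx0 : 0 < x := lt_of_le_of_lt h0 hx.1
      have hxT : x < T := hx.2.trans htT
      have h1 := hy_ode x hx0 hxT
      have h2 : K ^ α ≤ (y x) ^ α :=
        Real.rpow_le_rpow hKnonneg (hbig x hx).le hα.le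
      have h3 : B / τ ≤ A * (y x) ^ α := by
        rw [← hKα]; exact mul_le_mul_of_nonneg_left h2 hA.le
      linarith
    have := ftc (t - τ) t (fun u => h u - B / τ) h0 (by linarith) htT hint hd
    have hintIoo : IntegrableOn h (Set.Ioo (t - τ) t) :=
      (h_int (t - τ) t h0 htT).mono_set Set.Ioo_subset_Icc_self
    rw [MeasureTheory.integral_sub hintIoo (integrableOn_const measure_Ioo_lt_top.ne)] at this
    have hconst : (∫ _ in Set.Ioo (t - τ) t, (B / τ)) = B := by
      simp [Real.volume_Ioo, ENNReal.toReal_ofReal (by linarith : (0:ℝ) ≤ t - (t - τ)), hτ0.le]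
      field_simp
    rw [hconst] at this
    have := hh_bound t htτ htT
    linarith
  -- main induction
  have hKB : K + 2 * B ≤ M := by
    rw [hMdef, hKeq]; exact le_max_right _ _
  have main : ∀ n : ℕ, ∀ t : ℝ, 0 < t → t < T → t ≤ (n + 1) * τ → y t ≤ M := by
    intro n
    induction n with
    | zero =>
      intro t ht htT htn
      push_cast at htn
      have := init t ht (by linarith)
      exact this.trans (le_max_left _ _)
    | succ n ih =>
      intro t ht htT htn
      rcases le_or_gt t τ with hcase | hcase
      · exact (init t ht hcase).trans (le_max_left _ _)
      · by_cases hc : ∃ s ∈ Set.Ioo (t - τ) t, y s ≤ K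
        · obtain ⟨s, hs, hsK⟩ := hc
          have hs0 : 0 < s := by have := hs.1; linarith
          have := bound_step s t hs0 hs.2.le htT (by linarith [hs.1])
          have : y t ≤ K + B := by linarith
          linarith [hKB, hB]
        · push_neg at hc
          have hbig : ∀ s ∈ Set.Ioo (t - τ) t, K < y s := fun s hs => hc s hs
          have hstep := case2 t hcase htT hbig
          have h1 : (0:ℝ) < t - τ := by linarith
          have h2 : t - τ < T := by linarith
          have h3 : t - τ ≤ (n + 1) * τ := by
            push_cast at htn; linarith
          exact hstep.trans (ih (t - τ) h1 h2 h3)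
  intro t htτ htT
  obtain ⟨n, hn⟩ := exists_nat_ge (t / τ)
  have : t ≤ (n + 1) * τ := by
    have : t / τ ≤ n := hn
    have := (div_le_iff₀ hτ0).1 this
    nlinarith
  exact main n t (by linarith) htT this
end

section
/- Let N ≥ 4 be an integer and let α be a real number with α > (4N − 4 + N·√(2N² − 6N + 8))/(2N). Then α > 2, and there exists a real number p₀ with 1 < p₀ < 2α/(N−2) − 2/N such that both N(α−1)/(Nα − 2N + 1) < (N + 2p₀)/(N + p₀) and (α−1)/(α−2) < 1 + 2p₀/N hold. -/
set_option maxHeartbeats 1000000 in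
/-- Exponent-selection claim underlying the choices of the Hölder exponents
`θ` and `θ₁` in the proof of Lemma 3.3. -/
theorem stmt_13 (N : ℕ) (hN : 4 ≤ N) (α : ℝ)
    (hα : α > (4 * (N : ℝ) - 4 + N * Real.sqrt (2 * (N : ℝ) ^ 2 - 6 * N + 8)) / (2 * N)) :
    2 < α ∧
    ∃ p₀ : ℝ, 1 < p₀ ∧ p₀ < 2 * α / ((N : ℝ) - 2) - 2 / N ∧
      (N : ℝ) * (α - 1) / ((N : ℝ) * α - 2 * N + 1) < ((N : ℝ) + 2 * p₀) / ((N : ℝ) + p₀) ∧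
      (α - 1) / (α - 2) < 1 + 2 * p₀ / N := by
  set n : ℝ := (N : ℝ) with hn_def
  have hn : (4:ℝ) ≤ n := by rw [hn_def]; exact_mod_cast hN
  have hn0 : (0:ℝ) < n := by linarith
  have hD0 : (0:ℝ) ≤ 2 * n ^ 2 - 6 * n + 8 := by nlinarith
  set s := Real.sqrt (2 * n ^ 2 - 6 * n + 8) with hs_def
  have hs0 : 0 ≤ s := Real.sqrt_nonneg _
  have hs2 : s ^ 2 = 2 * n ^ 2 - 6 * n + 8 := Real.sq_sqrt hD0
  have hs4 : (4:ℝ) ≤ s := by nlinarith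
  have hkey : 2 * n * α > 4 * n - 4 + n * s := by
    have := (div_lt_iff₀ (by linarith : (0:ℝ) < 2 * n)).mp hα
    linarith
  have hα2 : (2:ℝ) < α := by nlinarith
  have hsn4 : n - 4 < s := by nlinarith
  have d1 : (0:ℝ) < n * α - 3 * n + 2 := by nlinarith
  have d2 : (0:ℝ) < n * α - 2 * n + 1 := by nlinarith
  have hg : n ^ 2 * (n - 1) * (n - 2) < 2 * (n * α - n + 2) * (n * α - 3 * n + 2) := by
    have h1 : n * s < 2 * n * α - 4 * n + 4 := by linarith
    have h2 : 0 ≤ n * s := by positivity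
    nlinarith [mul_self_lt_mul_self h2 h1, hs2]
  have hn2 : (0:ℝ) < n - 2 := by linarith
  have hUpos_denom : (0:ℝ) < n * (n - 2) := by positivity
  have hUeq : 2 * α / (n - 2) - 2 / n = 2 * (n * α - n + 2) / (n * (n - 2)) := by
    field_simp; ring
  have hcU : n * (n - 1) / (n * α - 3 * n + 2) < 2 * α / (n - 2) - 2 / n := by
    rw [hUeq, div_lt_div_iff₀ d1 hUpos_denom]
    nlinarith [hg]
  have h1U : (1:ℝ) < 2 * α / (n - 2) - 2 / n := by
    rw [hUeq, lt_div_iff₀ hUpos_denom]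
    nlinarith
  obtain ⟨p, hp1, hp2⟩ := exists_between (max_lt h1U hcU)
  have hpL1 : (1:ℝ) < p := lt_of_le_of_lt (le_max_left _ _) hp1
  have hpc : n * (n - 1) / (n * α - 3 * n + 2) < p := lt_of_le_of_lt (le_max_right _ _) hp1
  have hpd : n * (n - 1) < p * (n * α - 3 * n + 2) := (div_lt_iff₀ d1).mp hpc
  refine ⟨hα2, p, hpL1, hp2, ?_, ?_⟩
  · rw [div_lt_div_iff₀ d2 (by linarith : (0:ℝ) < n + p)]
    nlinarith [hpd]
  · have hbc : n / (2 * (α - 2)) ≤ n * (n - 1) / (n * α - 3 * n + 2) := by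
      rw [div_le_div_iff₀ (by linarith) d1]
      nlinarith
    have h' : n < p * (2 * (α - 2)) :=
      (div_lt_iff₀ (by linarith)).mp (lt_of_le_of_lt hbc hpc)
    have h1 : (1:ℝ) / (α - 2) < 2 * p / n := by
      rw [div_lt_div_iff₀ (by linarith) hn0]
      nlinarith [h']
    have hne : α - 2 ≠ 0 := ne_of_gt (by linarith)
    have h2 : (α - 1) / (α - 2) = 1 + 1 / (α - 2) := by
      field_simp
      ring
    rw [h2]; linarith [h1]
end
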